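/- Let a be real with a > (2 + √2)/4. Then there exists a real t such that 1 + cos t + a·cos(2t) < 0. -/

import Mathlib

theorem boundary_re_neg (a : ℝ) (ha : (2 + Real.sqrt 2) / 4 < a) :
    ∃ t : ℝ, 1 + Real.cos t + a * Real.cos (2 * t) < 0 := by
  have hs2 : Real.sqrt 2 ^ 2 = 2 := Real.sq_sqrt (by norm_num)
  have hs1 : (1:ℝ) < Real.sqrt 2 := by
    nlinarith [Real.sqrt_nonneg 2]
  have hapos : (0:ℝ) < a := by nlinarith
  refine ⟨Real.arccos (-1/(4*a)), ?_⟩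
  have hb1 : (-1:ℝ) ≤ -1/(4*a) := by
    rw [le_div_iff₀ (by positivity : (0:ℝ) < 4*a)]; nlinarith
  have hb2 : (-1:ℝ)/(4*a) ≤ 1 := by
    apply div_le_one_of_le₀ <;> nlinarith
  have hc : Real.cos (Real.arccos (-1/(4*a))) = -1/(4*a) :=
    Real.cos_arccos hb1 hb2
  rw [Real.cos_two_mul, hc]
  have h4a : (4*a) ≠ 0 := by positivity
  field_simp
  have h1 : 0 < 4*a - 2 - Real.sqrt 2 := by nlinarith
  have h2 : 0 < 4*a - 2 + Real.sqrt 2 := by nlinarith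
  nlinarith [mul_pos h1 h2, sq_nonneg a, mul_pos hapos hapos]
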